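/- arXiv:1706.07978 — 4 statements merged into one kernel-verified Lean document; each statement's English description precedes it below -/
import Mathlib

section
/- If (a_i)_{i≥1} is a real sequence with ∑_{i=1}^∞ i² a_i² < ∞, then for every j ≥ 1 the tail series ∑_{i=j}^∞ a_i converges absolutely, and there exists a universal constant C (independent of the sequence) such that ∑_{j=1}^∞ (∑_{i=j}^∞ a_i)² ≤ C ∑_{i=1}^∞ i² a_i². -/
lemma aux_tel1 (k : ℕ) :
    (((k:ℝ)+1) * Real.sqrt ((k:ℝ)+1))⁻¹ ≤
      6 * ((Real.sqrt ((k:ℝ)+1))⁻¹ - (Real.sqrt ((k:ℝ)+2))⁻¹) := by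
  set x := Real.sqrt ((k:ℝ)+1) with hx
  set y := Real.sqrt ((k:ℝ)+2) with hy
  have hk1 : (0:ℝ) < (k:ℝ)+1 := by positivity
  have hk2 : (0:ℝ) < (k:ℝ)+2 := by positivity
  have hx0 : 0 < x := Real.sqrt_pos.2 hk1
  have hy0 : 0 < y := Real.sqrt_pos.2 hk2
  have hx2 : x^2 = (k:ℝ)+1 := Real.sq_sqrt hk1.le
  have hy2 : y^2 = (k:ℝ)+2 := Real.sq_sqrt hk2.le
  have hx1 : 1 ≤ x := by nlinarith [Nat.cast_nonneg (α := ℝ) k]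
  have hxy : x ≤ y := Real.sqrt_le_sqrt (by linarith)
  have hy2x : y ≤ 2*x := by nlinarith
  have hdiff : (y - x) * (y + x) = 1 := by nlinarith
  have hsub : x⁻¹ - y⁻¹ = (y - x)/(x*y) := by field_simp
  rw [hsub, ← hx2]
  have h1 : 6 * ((y - x)/(x*y)) = 6 / (x*y*(y+x)) := by
    rw [mul_div_assoc', div_eq_div_iff (by positivity) (by positivity)]
    linear_combination (6*x*y) * hdiff
  rw [h1, inv_eq_one_div, div_le_div_iff₀ (by positivity) (by positivity)]
  nlinarith [mul_pos hx0 hx0, mul_pos (mul_pos hx0 hx0) hx0]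

lemma aux_tel2 (j : ℕ) :
    (Real.sqrt ((j:ℝ)+1))⁻¹ ≤ 2 * (Real.sqrt ((j:ℝ)+1) - Real.sqrt (j:ℝ)) := by
  set u := Real.sqrt (j:ℝ) with hu
  set v := Real.sqrt ((j:ℝ)+1) with hv
  have hj : (0:ℝ) ≤ (j:ℝ) := Nat.cast_nonneg j
  have hv0 : 0 < v := Real.sqrt_pos.2 (by linarith)
  have hu0 : 0 ≤ u := Real.sqrt_nonneg _
  have hu2 : u^2 = (j:ℝ) := Real.sq_sqrt hj
  have hv2 : v^2 = (j:ℝ)+1 := Real.sq_sqrt (by linarith)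
  have huv : u ≤ v := Real.sqrt_le_sqrt (by linarith)
  have hdiff : (v - u) * (v + u) = 1 := by nlinarith
  rw [inv_eq_one_div, div_le_iff₀ hv0]
  nlinarith

/-- Lemma 7, d = 1: here `a i` stands for `a_{i+1}`, so
`∑_{i≥1} i² a_i² = ∑' i, (i+1)² (a i)²` and the tail `∑_{i≥j} a_i` for `j ≥ 1`
is `∑' i, a (j + i)` with `j : ℕ` standing for `j+1`. -/
theorem stmt1 : ∃ C : ℝ, 0 < C ∧ ∀ a : ℕ → ℝ,
    Summable (fun i : ℕ => ((i : ℝ) + 1) ^ 2 * a i ^ 2) →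
      (∀ j : ℕ, Summable fun i : ℕ => |a (j + i)|) ∧
      Summable (fun j : ℕ => (∑' i : ℕ, a (j + i)) ^ 2) ∧
      ∑' j : ℕ, (∑' i : ℕ, a (j + i)) ^ 2 ≤
        C * ∑' i : ℕ, ((i : ℝ) + 1) ^ 2 * a i ^ 2 := by
  refine ⟨12, by norm_num, fun a ha => ?_⟩
  set r : ℕ → ℝ := fun k => Real.sqrt ((k:ℝ)+1) with hr_def
  set h : ℕ → ℝ := fun k => a k ^ 2 * ((k:ℝ)+1) * r k with hh_def
  set g2 : ℕ → ℝ := fun k => (((k:ℝ)+1) * r k)⁻¹ with hg2_def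
  have hr_pos : ∀ k, 0 < r k := fun k => Real.sqrt_pos.2 (by positivity)
  have hr_sq : ∀ k, r k ^ 2 = (k:ℝ)+1 := fun k => Real.sq_sqrt (by positivity)
  have hr_le : ∀ k, r k ≤ (k:ℝ)+1 := by
    intro k
    have : r k ^ 2 ≤ ((k:ℝ)+1)^2 := by
      rw [hr_sq k]; nlinarith [Nat.cast_nonneg (α := ℝ) k]
    nlinarith [hr_pos k]
  have hh_nonneg : ∀ k, 0 ≤ h k := fun k => by
    have := (hr_pos k).le; simp only [hh_def]; positivity
  have hh_le : ∀ k, h k ≤ ((k:ℝ)+1)^2 * a k ^ 2 := by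
    intro k
    simp only [hh_def]
    calc a k ^ 2 * ((k:ℝ)+1) * r k ≤ a k ^ 2 * ((k:ℝ)+1) * ((k:ℝ)+1) :=
          mul_le_mul_of_nonneg_left (hr_le k) (by positivity)
      _ = ((k:ℝ)+1)^2 * a k ^ 2 := by ring
  have hh_sum : Summable h := ha.of_nonneg_of_le hh_nonneg hh_le
  -- summability of |a|
  have hinv2 : Summable (fun k : ℕ => (((k:ℝ)+1)^2)⁻¹) := by
    have h0 : Summable (fun n : ℕ => 1 / (n:ℝ) ^ 2) :=
      Real.summable_one_div_nat_pow.2 one_lt_two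
    have h1 := (summable_nat_add_iff 1).2 h0
    refine h1.congr fun n => ?_
    push_cast
    rw [one_div]
  have habs : Summable (fun k => |a k|) := by
    refine Summable.of_nonneg_of_le (fun k => abs_nonneg _)
      (fun k => ?_) (((ha.add hinv2).mul_left (1/2)))
    have key : 2 * (((k:ℝ)+1) * |a k|) * (((k:ℝ)+1)⁻¹) ≤
        (((k:ℝ)+1) * |a k|)^2 + (((k:ℝ)+1)⁻¹)^2 := two_mul_le_add_sq _ _
    have hk : (0:ℝ) < (k:ℝ)+1 := by positivity
    have e1 : 2 * (((k:ℝ)+1) * |a k|) * (((k:ℝ)+1)⁻¹) = 2 * |a k| := by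
      field_simp
    rw [e1] at key
    have e2 : (((k:ℝ)+1) * |a k|)^2 = ((k:ℝ)+1)^2 * a k ^2 := by
      rw [mul_pow, sq_abs]
    have e3 : (((k:ℝ)+1)⁻¹)^2 = (((k:ℝ)+1)^2)⁻¹ := by rw [inv_pow]
    rw [e2, e3] at key
    linarith
  have habs_shift : ∀ j : ℕ, Summable fun i : ℕ => |a (j + i)| := fun j =>
    ((summable_nat_add_iff j).2 habs).congr fun i => by rw [add_comm]
  refine ⟨habs_shift, ?_⟩
  have hh_shift : ∀ j : ℕ, Summable fun i : ℕ => h (j + i) := fun j =>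
    ((summable_nat_add_iff j).2 hh_sum).congr fun i => by rw [add_comm]
  have hg2_nonneg : ∀ k, 0 ≤ g2 k := fun k => by
    have := (hr_pos k).le; simp only [hg2_def]; positivity
  -- telescoping bound for the tail of g2
  have tel1 : ∀ k : ℕ, g2 k ≤ 6 * ((r k)⁻¹ - (r (k+1))⁻¹) := by
    intro k
    have h0 := aux_tel1 k
    simp only [hg2_def, hr_def]
    convert h0 using 4
    push_cast; ring
  have hG_partial : ∀ j n : ℕ, ∑ i ∈ Finset.range n, g2 (j+i) ≤ 6 * (r j)⁻¹ := by
    intro j n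
    have step : ∑ i ∈ Finset.range n, g2 (j+i) ≤
        ∑ i ∈ Finset.range n, (6 * (r (j+i))⁻¹ - 6 * (r (j+i+1))⁻¹) := by
      refine Finset.sum_le_sum fun i _ => ?_
      have := tel1 (j+i)
      linarith
    have tele : ∑ i ∈ Finset.range n, (6 * (r (j+i))⁻¹ - 6 * (r (j+i+1))⁻¹) =
        6 * (r j)⁻¹ - 6 * (r (j+n))⁻¹ := by
      have := Finset.sum_range_sub' (fun i => 6 * (r (j+i))⁻¹) n
      simpa [add_assoc] using this
    have hnn : 0 ≤ 6 * (r (j+n))⁻¹ := by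
      have := (hr_pos (j+n)).le; positivity
    linarith
  have hG_sum : ∀ j : ℕ, Summable fun i : ℕ => g2 (j+i) := fun j =>
    summable_of_sum_range_le (fun i => hg2_nonneg _) (hG_partial j)
  have hG_le : ∀ j : ℕ, (∑' i : ℕ, g2 (j+i)) ≤ 6 * (r j)⁻¹ := fun j =>
    Real.tsum_le_of_sum_range_le (fun i => hg2_nonneg _) (hG_partial j)
  -- Cauchy-Schwarz per tail
  have hCS : ∀ j : ℕ, (∑' i : ℕ, a (j + i)) ^ 2 ≤
      (∑' i : ℕ, h (j+i)) * (∑' i : ℕ, g2 (j+i)) := by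
    intro j
    set q : ℕ → ℝ := fun k => Real.sqrt (r k) with hq_def
    set f : ℕ → ℝ := fun k => |a k| * (r k * q k) with hf_def
    set g : ℕ → ℝ := fun k => (r k * q k)⁻¹ with hg_def
    have hq_sq : ∀ k, q k ^ 2 = r k := fun k => Real.sq_sqrt (hr_pos k).le
    have hq_pos : ∀ k, 0 < q k := fun k => Real.sqrt_pos.2 (hr_pos k)
    have hf2 : ∀ k, f k ^ 2 = h k := by
      intro k
      simp only [hf_def, hh_def]
      rw [mul_pow, mul_pow, sq_abs, hq_sq, hr_sq]
      ring
    have hgg2 : ∀ k, g k ^ 2 = g2 k := by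
      intro k
      simp only [hg_def, hg2_def]
      rw [inv_pow, mul_pow, hq_sq, hr_sq]
    have hfg : ∀ k, f k * g k = |a k| := by
      intro k
      simp only [hf_def, hg_def]
      have hne : r k * q k ≠ 0 := (mul_pos (hr_pos k) (hq_pos k)).ne'
      field_simp
      rw [mul_assoc]; exact mul_div_cancel_right₀ _ hne
    set F := ∑' i : ℕ, h (j+i) with hF
    set G := ∑' i : ℕ, g2 (j+i) with hG
    have hFnn : 0 ≤ F := tsum_nonneg fun i => hh_nonneg _
    have hGnn : 0 ≤ G := tsum_nonneg fun i => hg2_nonneg _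
    have hstep : ∀ s : Finset ℕ, ∑ i ∈ s, |a (j + i)| ≤ Real.sqrt (F * G) := by
      intro s
      have hCSf : (∑ i ∈ s, |a (j+i)|) ^ 2 ≤
          (∑ i ∈ s, f (j+i) ^ 2) * (∑ i ∈ s, g (j+i) ^ 2) := by
        have := Finset.sum_mul_sq_le_sq_mul_sq s (fun i => f (j+i)) (fun i => g (j+i))
        calc (∑ i ∈ s, |a (j+i)|) ^ 2
            = (∑ i ∈ s, f (j+i) * g (j+i)) ^ 2 := by
              congr 1; exact Finset.sum_congr rfl fun i _ => (hfg (j+i)).symm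
          _ ≤ _ := this
      have h1 : ∑ i ∈ s, f (j+i) ^ 2 ≤ F := by
        rw [show ∑ i ∈ s, f (j+i) ^ 2 = ∑ i ∈ s, h (j+i) from
          Finset.sum_congr rfl fun i _ => hf2 (j+i)]
        exact Summable.sum_le_tsum s (fun i _ => hh_nonneg _) (hh_shift j)
      have h2 : ∑ i ∈ s, g (j+i) ^ 2 ≤ G := by
        rw [show ∑ i ∈ s, g (j+i) ^ 2 = ∑ i ∈ s, g2 (j+i) from
          Finset.sum_congr rfl fun i _ => hgg2 (j+i)]
        exact Summable.sum_le_tsum s (fun i _ => hg2_nonneg _) (hG_sum j)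
      have hprod : (∑ i ∈ s, |a (j+i)|) ^ 2 ≤ F * G := by
        refine hCSf.trans (mul_le_mul h1 h2 ?_ hFnn)
        exact Finset.sum_nonneg fun i _ => sq_nonneg _
      exact (Real.le_sqrt (Finset.sum_nonneg fun i _ => abs_nonneg _)
        (mul_nonneg hFnn hGnn)).2 hprod
    have hT : (∑' i : ℕ, |a (j+i)|) ≤ Real.sqrt (F * G) :=
      Summable.tsum_le_of_sum_le (habs_shift j) hstep
    have habs_tsum : |∑' i : ℕ, a (j+i)| ≤ ∑' i : ℕ, |a (j+i)| := by
      have := norm_tsum_le_tsum_norm (f := fun i => a (j+i)) ?_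
      · simpa [Real.norm_eq_abs] using this
      · simpa [Real.norm_eq_abs] using habs_shift j
    calc (∑' i : ℕ, a (j + i)) ^ 2 = |∑' i : ℕ, a (j+i)| ^ 2 := (sq_abs _).symm
      _ ≤ (Real.sqrt (F * G)) ^ 2 := by
          apply pow_le_pow_left₀ (abs_nonneg _) (habs_tsum.trans hT)
      _ = F * G := Real.sq_sqrt (mul_nonneg hFnn hGnn)
  -- the swap estimate
  have hswap : ∀ N : ℕ, ∑ j ∈ Finset.range N, (r j)⁻¹ * ∑' i : ℕ, h (j+i) ≤
      2 * ∑' i : ℕ, ((i : ℝ) + 1) ^ 2 * a i ^ 2 := by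
    intro N
    set w : ℕ → ℕ → ℝ := fun j k => if j ≤ k then (r j)⁻¹ * h k else 0 with hw_def
    have hw_nonneg : ∀ j k, 0 ≤ w j k := by
      intro j k
      simp only [hw_def]
      split
      · exact mul_nonneg (inv_nonneg.2 (hr_pos j).le) (hh_nonneg k)
      · exact le_refl 0
    have hw_le : ∀ j k, w j k ≤ (r j)⁻¹ * h k := by
      intro j k
      simp only [hw_def]
      split
      · exact le_refl _
      · exact mul_nonneg (inv_nonneg.2 (hr_pos j).le) (hh_nonneg k)
    have hw_sum : ∀ j, Summable (w j) := fun j =>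
      Summable.of_nonneg_of_le (hw_nonneg j) (hw_le j) (hh_sum.mul_left _)
    have hwF : ∀ j, ∑' k : ℕ, w j k = (r j)⁻¹ * ∑' i : ℕ, h (j+i) := by
      intro j
      have key := Summable.sum_add_tsum_nat_add (f := w j) j (hw_sum j)
      have hzero : ∑ k ∈ Finset.range j, w j k = 0 := by
        refine Finset.sum_eq_zero fun k hk => ?_
        rw [Finset.mem_range] at hk
        simp only [hw_def]
        rw [if_neg (by omega)]
      have htail : ∑' i : ℕ, w j (i+j) = (r j)⁻¹ * ∑' i : ℕ, h (j+i) := by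
        have he : ∀ i : ℕ, w j (i+j) = (r j)⁻¹ * h (j+i) := by
          intro i
          simp only [hw_def]
          rw [if_pos (by omega), add_comm i j]
        rw [tsum_congr he, tsum_mul_left]
      rw [← key, hzero, zero_add, htail]
    have hswap2 : ∑ j ∈ Finset.range N, (r j)⁻¹ * ∑' i : ℕ, h (j+i) =
        ∑' k : ℕ, ∑ j ∈ Finset.range N, w j k := by
      rw [Summable.tsum_finsetSum (fun j _ => hw_sum j)]
      exact Finset.sum_congr rfl fun j _ => (hwF j).symm
    set c : ℕ → ℝ := fun k => ∑ j ∈ Finset.range N, if j ≤ k then (r j)⁻¹ else 0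
      with hc_def
    have hcw : ∀ k, ∑ j ∈ Finset.range N, w j k = c k * h k := by
      intro k
      simp only [hc_def]
      rw [Finset.sum_mul]
      refine Finset.sum_congr rfl fun j _ => ?_
      simp only [hw_def]
      split <;> simp
    have hc_nonneg : ∀ k, 0 ≤ c k := by
      intro k
      refine Finset.sum_nonneg fun j _ => ?_
      split
      · exact inv_nonneg.2 (hr_pos j).le
      · exact le_refl 0
    have hc_le : ∀ k, c k ≤ 2 * r k := by
      intro k
      have h1 : c k = ∑ j ∈ (Finset.range N).filter (· ≤ k), (r j)⁻¹ :=
        (Finset.sum_filter _ _).symm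
      have h2 : ∑ j ∈ (Finset.range N).filter (· ≤ k), (r j)⁻¹ ≤
          ∑ j ∈ Finset.range (k+1), (r j)⁻¹ := by
        refine Finset.sum_le_sum_of_subset_of_nonneg ?_
          (fun j _ _ => inv_nonneg.2 (hr_pos j).le)
        intro j hj
        simp only [Finset.mem_filter, Finset.mem_range] at hj ⊢
        omega
      have h3 : ∑ j ∈ Finset.range (k+1), (r j)⁻¹ ≤
          ∑ j ∈ Finset.range (k+1),
            (2*Real.sqrt ((j:ℝ)+1) - 2*Real.sqrt (j:ℝ)) := by
        refine Finset.sum_le_sum fun j _ => ?_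
        have := aux_tel2 j
        simp only [hr_def]
        linarith
      have h4 : ∑ j ∈ Finset.range (k+1),
          (2*Real.sqrt ((j:ℝ)+1) - 2*Real.sqrt (j:ℝ)) = 2 * r k := by
        have t := Finset.sum_range_sub (fun j : ℕ => 2*Real.sqrt (j:ℝ)) (k+1)
        have e : ∀ j : ℕ, 2*Real.sqrt ((j:ℝ)+1) - 2*Real.sqrt (j:ℝ) =
            (fun j : ℕ => 2*Real.sqrt (j:ℝ)) (j+1) -
            (fun j : ℕ => 2*Real.sqrt (j:ℝ)) j := by
          intro j
          simp only
          push_cast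
          ring_nf
        rw [Finset.sum_congr rfl (fun j _ => e j), t]
        simp only [hr_def]
        push_cast
        simp [Real.sqrt_zero]
      rw [h1] at *
      linarith
    have hrh : ∀ k, r k * h k = ((k:ℝ)+1)^2 * a k^2 := by
      intro k
      simp only [hh_def]
      linear_combination (a k^2 * ((k:ℝ)+1)) * (hr_sq k)
    have hpt : ∀ k, c k * h k ≤ 2 * (((k:ℝ)+1)^2 * a k^2) := by
      intro k
      calc c k * h k ≤ (2 * r k) * h k :=
            mul_le_mul_of_nonneg_right (hc_le k) (hh_nonneg k)
        _ = 2 * (((k:ℝ)+1)^2 * a k^2) := by rw [mul_assoc, hrh k]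
    have hch_sum : Summable (fun k => c k * h k) :=
      Summable.of_nonneg_of_le
        (fun k => mul_nonneg (hc_nonneg k) (hh_nonneg k)) hpt (ha.mul_left 2)
    calc ∑ j ∈ Finset.range N, (r j)⁻¹ * ∑' i : ℕ, h (j+i)
        = ∑' k : ℕ, ∑ j ∈ Finset.range N, w j k := hswap2
      _ = ∑' k : ℕ, c k * h k := tsum_congr hcw
      _ ≤ ∑' k : ℕ, 2 * (((k:ℝ)+1)^2 * a k^2) :=
          Summable.tsum_le_tsum hpt hch_sum (ha.mul_left 2)
      _ = 2 * ∑' i : ℕ, ((i : ℝ) + 1) ^ 2 * a i ^ 2 := tsum_mul_left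
  -- assemble
  have hFnn : ∀ j, 0 ≤ ∑' i : ℕ, h (j+i) := fun j => tsum_nonneg fun i => hh_nonneg _
  have hmain : ∀ j : ℕ, (∑' i : ℕ, a (j + i)) ^ 2 ≤
      6 * ((r j)⁻¹ * ∑' i : ℕ, h (j+i)) := by
    intro j
    calc (∑' i : ℕ, a (j + i)) ^ 2 ≤
        (∑' i : ℕ, h (j+i)) * (∑' i : ℕ, g2 (j+i)) := hCS j
      _ ≤ (∑' i : ℕ, h (j+i)) * (6 * (r j)⁻¹) :=
          mul_le_mul_of_nonneg_left (hG_le j) (hFnn j)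
      _ = 6 * ((r j)⁻¹ * ∑' i : ℕ, h (j+i)) := by ring
  have hfinal : ∀ N : ℕ, ∑ j ∈ Finset.range N, (∑' i : ℕ, a (j + i)) ^ 2 ≤
      12 * ∑' i : ℕ, ((i : ℝ) + 1) ^ 2 * a i ^ 2 := by
    intro N
    calc ∑ j ∈ Finset.range N, (∑' i : ℕ, a (j + i)) ^ 2
        ≤ ∑ j ∈ Finset.range N, 6 * ((r j)⁻¹ * ∑' i : ℕ, h (j+i)) :=
          Finset.sum_le_sum fun j _ => hmain j
      _ = 6 * ∑ j ∈ Finset.range N, (r j)⁻¹ * ∑' i : ℕ, h (j+i) := by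
          rw [Finset.mul_sum]
      _ ≤ 6 * (2 * ∑' i : ℕ, ((i : ℝ) + 1) ^ 2 * a i ^ 2) := by
          have := hswap N
          linarith
      _ = 12 * ∑' i : ℕ, ((i : ℝ) + 1) ^ 2 * a i ^ 2 := by ring
  exact ⟨summable_of_sum_range_le (fun j => sq_nonneg _) hfinal,
    Real.tsum_le_of_sum_range_le (fun j => sq_nonneg _) hfinal⟩
end

section
/- If (a_{i,j})_{i,j≥1} is a double-indexed real array with ∑_{i=1}^∞ ∑_{j=1}^∞ i² j² a_{i,j}² < ∞, then for all j₁, j₂ ≥ 1 the double tail sum ∑_{i₁≥j₁} ∑_{i₂≥j₂} a_{i₁,i₂} converges absolutely, and there is a universal constant C with ∑_{j₁=1}^∞ ∑_{j₂=1}^∞ (∑_{i₁≥j₁} ∑_{i₂≥j₂} a_{i₁,i₂})² ≤ C ∑_{i₁=1}^∞ ∑_{i₂=1}^∞ i₁² i₂² a_{i₁,i₂}². -/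
noncomputable def sq1 (n : ℕ) : ℝ := Real.sqrt ((n : ℝ) + 1)
noncomputable def s3 (n : ℕ) : ℝ := ((n : ℝ) + 1) * sq1 n

lemma sq1_pos (n : ℕ) : 0 < sq1 n := Real.sqrt_pos.2 (by positivity)
lemma sq1_sq (n : ℕ) : sq1 n ^ 2 = (n : ℝ) + 1 := Real.sq_sqrt (by positivity)
lemma sq1_le (n : ℕ) : sq1 n ≤ (n : ℝ) + 1 := by
  rw [sq1]
  calc Real.sqrt ((n:ℝ)+1) ≤ Real.sqrt (((n:ℝ)+1)^2) := by
        apply Real.sqrt_le_sqrt; nlinarith [Nat.cast_nonneg (α := ℝ) n]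
    _ = (n:ℝ)+1 := Real.sqrt_sq (by positivity)
lemma s3_pos (n : ℕ) : 0 < s3 n := mul_pos (by positivity) (sq1_pos n)
lemma s3_le (n : ℕ) : s3 n ≤ ((n : ℝ) + 1) ^ 2 := by
  rw [s3, sq]
  exact mul_le_mul_of_nonneg_left (sq1_le n) (by positivity)
lemma sq1_mul_s3 (n : ℕ) : sq1 n * s3 n = ((n : ℝ) + 1) ^ 2 := by
  rw [s3]
  calc sq1 n * (((n:ℝ)+1) * sq1 n) = ((n:ℝ)+1) * (sq1 n ^2) := by ring
    _ = ((n:ℝ)+1)^2 := by rw [sq1_sq]; ring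

/-- key pointwise telescoping bound: `1/(m+1)^{3/2} ≤ 2/√m - 2/√(m+1)` for `m ≥ 1`. -/
lemma tele3 (m : ℕ) (hm : 1 ≤ m) :
    1 / s3 m ≤ 2 / Real.sqrt m - 2 / Real.sqrt ((m : ℝ) + 1) := by
  set x := Real.sqrt (m : ℝ) with hx
  set y := Real.sqrt ((m : ℝ) + 1) with hy
  have hx1 : (1:ℝ) ≤ x := by
    rw [hx, show (1:ℝ) = Real.sqrt 1 by simp]
    exact Real.sqrt_le_sqrt (by exact_mod_cast hm)
  have hxp : 0 < x := lt_of_lt_of_le one_pos hx1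
  have hyp : 0 < y := Real.sqrt_pos.2 (by positivity)
  have hx2 : x ^ 2 = (m : ℝ) := Real.sq_sqrt (by positivity)
  have hy2 : y ^ 2 = (m : ℝ) + 1 := Real.sq_sqrt (by positivity)
  have hxy : x ≤ y := Real.sqrt_le_sqrt (by linarith)
  have hs3 : s3 m = y ^ 2 * y := by rw [s3, sq1, hy2]
  rw [hs3, div_sub_div _ _ (ne_of_gt hxp) (ne_of_gt hyp),
    div_le_div_iff₀ (by positivity) (by positivity)]
  have h1 : (y - x) * (y + x) = 1 := by nlinarith
  nlinarith [mul_pos hxp hyp, mul_pos (mul_pos hxp hyp) hyp, sq_nonneg (y - x),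
    mul_le_mul_of_nonneg_right hxy (le_of_lt (mul_pos hyp hyp)),
    mul_le_mul_of_nonneg_right hxy (mul_nonneg hxp.le hyp.le)]

/-- key pointwise telescoping bound: `1/√(k+1) ≤ 2√(k+1) - 2√k`. -/
lemma tele1 (k : ℕ) :
    1 / sq1 k ≤ 2 * Real.sqrt ((k : ℝ) + 1) - 2 * Real.sqrt k := by
  set x := Real.sqrt (k : ℝ) with hx
  set y := Real.sqrt ((k : ℝ) + 1) with hy
  have hxp : 0 ≤ x := Real.sqrt_nonneg _
  have hyp : 0 < y := Real.sqrt_pos.2 (by positivity)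
  have hx2 : x ^ 2 = (k : ℝ) := Real.sq_sqrt (by positivity)
  have hy2 : y ^ 2 = (k : ℝ) + 1 := Real.sq_sqrt (by positivity)
  have hxy : x ≤ y := Real.sqrt_le_sqrt (by linarith)
  have h1 : (y - x) * (y + x) = 1 := by nlinarith
  rw [sq1, ← hy, div_le_iff₀ hyp]
  nlinarith

/-- partial sums of `1/s3` tails. -/
lemma tail3_partial (j n : ℕ) :
    ∑ p ∈ Finset.range n, 1 / s3 (j + p) ≤ 3 / sq1 j := by
  have hsq := sq1_pos j
  have h0 : 1 / s3 j ≤ 1 / sq1 j := by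
    apply div_le_div_of_nonneg_left one_pos.le (sq1_pos j)
    rw [s3]; nlinarith [sq1_pos j, sq1_le j, Nat.cast_nonneg (α := ℝ) j]
  rcases n with _ | n
  · simpa using le_of_lt (div_pos (by norm_num) hsq)
  rw [Finset.sum_range_succ']
  simp only [Nat.add_zero]
  set φ : ℕ → ℝ := fun i => 2 / Real.sqrt ((j : ℝ) + i + 1) with hφ
  have htele : ∑ p ∈ Finset.range n, 1 / s3 (j + (p + 1)) ≤ 2 / sq1 j := by
    have hb : ∀ p ∈ Finset.range n, 1 / s3 (j + (p + 1)) ≤ φ p - φ (p + 1) := by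
      intro p _
      have h := tele3 (j + p + 1) (by omega)
      have e2 : j + (p + 1) = j + p + 1 := by omega
      rw [e2]
      have c1 : Real.sqrt ((j + p + 1 : ℕ) : ℝ) = Real.sqrt ((j : ℝ) + p + 1) := by
        norm_num
      have c2 : Real.sqrt (((j + p + 1 : ℕ) : ℝ) + 1) = Real.sqrt ((j : ℝ) + (p + 1) + 1) := by
        push_cast; ring_nf
      rw [c1, c2] at h
      simpa [hφ] using h
    calc ∑ p ∈ Finset.range n, 1 / s3 (j + (p + 1))
        ≤ ∑ p ∈ Finset.range n, (φ p - φ (p + 1)) := Finset.sum_le_sum hb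
      _ = φ 0 - φ n := Finset.sum_range_sub' φ n
      _ ≤ φ 0 := by
          have : 0 ≤ φ n := by rw [hφ]; positivity
          linarith
      _ = 2 / sq1 j := by rw [hφ, sq1]; norm_num
  have h3 : 3 / sq1 j = 2 / sq1 j + 1 / sq1 j := by ring
  rw [h3]
  exact add_le_add htele h0

lemma tail3_summable (j : ℕ) : Summable (fun p : ℕ => 1 / s3 (j + p)) :=
  summable_of_sum_range_le (fun p => le_of_lt (div_pos one_pos (s3_pos _))) (tail3_partial j)

lemma tail3_tsum (j : ℕ) : ∑' p : ℕ, 1 / s3 (j + p) ≤ 3 / sq1 j :=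
  Summable.tsum_le_of_sum_range_le (tail3_summable j) (tail3_partial j)

/-- head sums of `1/sq1`. -/
lemma head1 (i : ℕ) : ∑ k ∈ Finset.range (i + 1), 1 / sq1 k ≤ 2 * sq1 i := by
  set ψ : ℕ → ℝ := fun m => 2 * Real.sqrt (m : ℝ) with hψ
  calc ∑ k ∈ Finset.range (i + 1), 1 / sq1 k
      ≤ ∑ k ∈ Finset.range (i + 1), (ψ (k + 1) - ψ k) := by
        apply Finset.sum_le_sum
        intro k _
        have h := tele1 k
        have c1 : Real.sqrt (((k + 1 : ℕ)) : ℝ) = Real.sqrt ((k : ℝ) + 1) := by norm_num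
        rw [hψ]; simp only []
        rw [c1]
        exact h
    _ = ψ (i + 1) - ψ 0 := Finset.sum_range_sub ψ (i + 1)
    _ = 2 * sq1 i := by
        rw [hψ, sq1]; norm_num

set_option maxHeartbeats 1000000 in
lemma csj (a : ℕ → ℕ → ℝ)
    (hg : Summable (fun p : ℕ × ℕ => s3 p.1 * s3 p.2 * a p.1 p.2 ^ 2)) (j₁ j₂ : ℕ) :
    Summable (fun p : ℕ × ℕ => |a (j₁ + p.1) (j₂ + p.2)|) ∧
    (∑' p : ℕ × ℕ, |a (j₁ + p.1) (j₂ + p.2)|) ^ 2 ≤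
      (∑' p : ℕ × ℕ, s3 (j₁ + p.1) * s3 (j₂ + p.2) * a (j₁ + p.1) (j₂ + p.2) ^ 2)
        * (3 / sq1 j₁ * (3 / sq1 j₂)) := by
  set G : ℕ × ℕ → ℝ := fun p => s3 (j₁ + p.1) * s3 (j₂ + p.2) * a (j₁ + p.1) (j₂ + p.2) ^ 2
    with hG
  set H : ℕ × ℕ → ℝ := fun p => 1 / s3 (j₁ + p.1) * (1 / s3 (j₂ + p.2)) with hH
  have hGnn : ∀ p, 0 ≤ G p := fun p =>
    mul_nonneg (mul_nonneg (s3_pos _).le (s3_pos _).le) (sq_nonneg _)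
  have hHnn : ∀ p : ℕ × ℕ, 0 ≤ H p := fun p =>
    mul_nonneg (le_of_lt (div_pos one_pos (s3_pos _))) (le_of_lt (div_pos one_pos (s3_pos _)))
  have hGsum : Summable G := by
    have hinj : Function.Injective (fun p : ℕ × ℕ => ((j₁ + p.1, j₂ + p.2) : ℕ × ℕ)) := by
      intro p q h
      simp only [Prod.mk.injEq] at h
      exact Prod.ext (by omega) (by omega)
    exact Summable.comp_injective (f := fun p : ℕ × ℕ => s3 p.1 * s3 p.2 * a p.1 p.2 ^ 2)
      (i := fun p : ℕ × ℕ => ((j₁ + p.1, j₂ + p.2) : ℕ × ℕ)) hg hinj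
  have hHsum : Summable H :=
    (tail3_summable j₁).mul_of_nonneg (tail3_summable j₂)
      (fun p => le_of_lt (div_pos one_pos (s3_pos _)))
      (fun p => le_of_lt (div_pos one_pos (s3_pos _)))
  have hGH : ∀ p : ℕ × ℕ, G p * H p = a (j₁ + p.1) (j₂ + p.2) ^ 2 := by
    intro p
    rw [hG, hH]
    field_simp
    exact mul_div_cancel_left₀ _ (mul_pos (s3_pos _) (s3_pos _)).ne'
  have hHfact : ∑' p : ℕ × ℕ, H p =
      (∑' p : ℕ, 1 / s3 (j₁ + p)) * (∑' p : ℕ, 1 / s3 (j₂ + p)) := by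
    rw [Summable.tsum_prod' hHsum (fun b =>
      Summable.mul_left (1 / s3 (j₁ + b)) (tail3_summable j₂))]
    calc ∑' b : ℕ, ∑' c : ℕ, 1 / s3 (j₁ + b) * (1 / s3 (j₂ + c))
        = ∑' b : ℕ, 1 / s3 (j₁ + b) * ∑' c : ℕ, 1 / s3 (j₂ + c) := by
          congr 1; funext b; exact tsum_mul_left
      _ = (∑' p : ℕ, 1 / s3 (j₁ + p)) * (∑' p : ℕ, 1 / s3 (j₂ + p)) := tsum_mul_right
  have hHtsum : ∑' p : ℕ × ℕ, H p ≤ 3 / sq1 j₁ * (3 / sq1 j₂) := by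
    rw [hHfact]
    apply mul_le_mul (tail3_tsum j₁) (tail3_tsum j₂)
      (tsum_nonneg fun p => le_of_lt (div_pos one_pos (s3_pos _)))
      (le_of_lt (div_pos (by norm_num) (sq1_pos _)))
  have hconj : Real.HolderConjugate 2 2 := Real.holderConjugate_iff.mpr ⟨one_lt_two, by norm_num⟩
  have hGr : (fun p : ℕ × ℕ => Real.sqrt (G p) ^ (2 : ℝ)) = G := by
    funext p; rw [Real.rpow_two, Real.sq_sqrt (hGnn p)]
  have hHr : (fun p : ℕ × ℕ => Real.sqrt (H p) ^ (2 : ℝ)) = H := by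
    funext p; rw [Real.rpow_two, Real.sq_sqrt (hHnn p)]
  obtain ⟨hsum, hle⟩ := Real.summable_and_inner_le_Lp_mul_Lq_tsum_of_nonneg hconj
    (f := fun p => Real.sqrt (G p)) (g := fun p => Real.sqrt (H p))
    (fun p => Real.sqrt_nonneg _) (fun p => Real.sqrt_nonneg _)
    (by rw [hGr]; exact hGsum) (by rw [hHr]; exact hHsum)
  have habs : (fun p : ℕ × ℕ => Real.sqrt (G p) * Real.sqrt (H p)) =
      (fun p : ℕ × ℕ => |a (j₁ + p.1) (j₂ + p.2)|) := by
    funext p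
    rw [← Real.sqrt_mul (hGnn p), hGH p, Real.sqrt_sq_eq_abs]
  rw [habs] at hsum hle
  rw [hGr, hHr] at hle
  refine ⟨hsum, ?_⟩
  have hle2 : ∑' p : ℕ × ℕ, |a (j₁ + p.1) (j₂ + p.2)| ≤
      Real.sqrt (∑' p, G p) * Real.sqrt (∑' p, H p) := by
    rw [Real.sqrt_eq_rpow, Real.sqrt_eq_rpow]
    exact hle
  calc (∑' p : ℕ × ℕ, |a (j₁ + p.1) (j₂ + p.2)|) ^ 2
      ≤ (Real.sqrt (∑' p, G p) * Real.sqrt (∑' p, H p)) ^ 2 := by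
        apply pow_le_pow_left₀ (tsum_nonneg fun p => abs_nonneg _) hle2
    _ = (∑' p, G p) * (∑' p, H p) := by
        rw [mul_pow, Real.sq_sqrt (tsum_nonneg hGnn), Real.sq_sqrt (tsum_nonneg hHnn)]
    _ ≤ (∑' p, G p) * (3 / sq1 j₁ * (3 / sq1 j₂)) :=
        mul_le_mul_of_nonneg_left hHtsum (tsum_nonneg hGnn)

/-- reindexing equivalence `(j,p) ↦ (j, j+p)`. -/
def eq2 : ℕ × ℕ ≃ {q : ℕ × ℕ // q.1 ≤ q.2} where
  toFun p := ⟨(p.1, p.1 + p.2), Nat.le_add_right _ _⟩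
  invFun q := (q.1.1, q.1.2 - q.1.1)
  left_inv p := by simp
  right_inv q := by
    rcases q with ⟨⟨j, i⟩, h⟩
    simp only [Set.coe_setOf] at h ⊢
    exact Subtype.ext (Prod.ext rfl (by simp at h ⊢; omega))

open ENNReal in
lemma swap1 (w u : ℕ → ℝ≥0∞) :
    ∑' j : ℕ, ∑' p : ℕ, w j * u (j + p)
      = ∑' i : ℕ, (∑ k ∈ Finset.range (i + 1), w k) * u i := by
  have h1 : ∑' j : ℕ, ∑' p : ℕ, w j * u (j + p) = ∑' q : ℕ × ℕ, w q.1 * u (q.1 + q.2) :=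
    (ENNReal.tsum_prod (f := fun j p => w j * u (j + p))).symm
  have h2 := Equiv.tsum_eq eq2 (fun q : {q : ℕ × ℕ // q.1 ≤ q.2} => w q.1.1 * u q.1.2)
  have h3 : ∑' q : ℕ × ℕ, w q.1 * u (q.1 + q.2)
      = ∑' q : {q : ℕ × ℕ // q.1 ≤ q.2}, w q.1.1 * u q.1.2 := by
    rw [← h2]; rfl
  have h4 := tsum_subtype {q : ℕ × ℕ | q.1 ≤ q.2} (fun q : ℕ × ℕ => w q.1 * u q.2)
  have h5 : ∑' q : ℕ × ℕ, Set.indicator {q : ℕ × ℕ | q.1 ≤ q.2} (fun q => w q.1 * u q.2) q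
      = ∑' i : ℕ, ∑' j : ℕ,
        Set.indicator {q : ℕ × ℕ | q.1 ≤ q.2} (fun q => w q.1 * u q.2) (j, i) := by
    rw [ENNReal.tsum_prod']
    exact ENNReal.tsum_comm
  have h6 : ∀ i : ℕ, ∑' j : ℕ,
      Set.indicator {q : ℕ × ℕ | q.1 ≤ q.2} (fun q => w q.1 * u q.2) (j, i)
        = (∑ k ∈ Finset.range (i + 1), w k) * u i := by
    intro i
    rw [tsum_eq_sum (s := Finset.range (i + 1)) (by
      intro j hj
      apply Set.indicator_of_notMem
      simp at hj ⊢
      omega)]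
    rw [Finset.sum_congr rfl (fun j hj => Set.indicator_of_mem (by
      simp at hj ⊢; omega) _), Finset.sum_mul]
  rw [h1, h3]
  erw [h4]
  rw [h5]
  exact tsum_congr h6

open ENNReal in
set_option maxHeartbeats 1000000 in
/-- Lemma 7, d = 2: `a i j` stands for `a_{i+1,j+1}`. -/
theorem stmt2 : ∃ C : ℝ, 0 < C ∧ ∀ a : ℕ → ℕ → ℝ,
    Summable (fun p : ℕ × ℕ =>
        ((p.1 : ℝ) + 1) ^ 2 * ((p.2 : ℝ) + 1) ^ 2 * a p.1 p.2 ^ 2) →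
      (∀ j₁ j₂ : ℕ, Summable fun p : ℕ × ℕ => |a (j₁ + p.1) (j₂ + p.2)|) ∧
      Summable (fun j : ℕ × ℕ =>
        (∑' p : ℕ × ℕ, a (j.1 + p.1) (j.2 + p.2)) ^ 2) ∧
      ∑' j : ℕ × ℕ, (∑' p : ℕ × ℕ, a (j.1 + p.1) (j.2 + p.2)) ^ 2 ≤
        C * ∑' p : ℕ × ℕ,
          ((p.1 : ℝ) + 1) ^ 2 * ((p.2 : ℝ) + 1) ^ 2 * a p.1 p.2 ^ 2 := by
  refine ⟨36, by norm_num, ?_⟩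
  intro a hF
  -- the weighted square array and its comparisons
  have hgnn : ∀ p : ℕ × ℕ, 0 ≤ s3 p.1 * s3 p.2 * a p.1 p.2 ^ 2 := fun p =>
    mul_nonneg (mul_nonneg (s3_pos _).le (s3_pos _).le) (sq_nonneg _)
  have hgle : ∀ p : ℕ × ℕ, s3 p.1 * s3 p.2 * a p.1 p.2 ^ 2 ≤
      ((p.1 : ℝ) + 1) ^ 2 * ((p.2 : ℝ) + 1) ^ 2 * a p.1 p.2 ^ 2 := by
    intro p
    have h1 : s3 p.1 * s3 p.2 ≤ ((p.1 : ℝ) + 1) ^ 2 * ((p.2 : ℝ) + 1) ^ 2 :=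
      mul_le_mul (s3_le _) (s3_le _) (s3_pos _).le (by positivity)
    exact mul_le_mul_of_nonneg_right h1 (sq_nonneg _)
  have hgsum : Summable (fun p : ℕ × ℕ => s3 p.1 * s3 p.2 * a p.1 p.2 ^ 2) :=
    Summable.of_nonneg_of_le hgnn hgle hF
  have hshift : ∀ j₁ j₂ : ℕ, Summable
      (fun p : ℕ × ℕ => s3 (j₁ + p.1) * s3 (j₂ + p.2) * a (j₁ + p.1) (j₂ + p.2) ^ 2) := by
    intro j₁ j₂
    have hinj : Function.Injective (fun p : ℕ × ℕ => ((j₁ + p.1, j₂ + p.2) : ℕ × ℕ)) := by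
      intro p q h
      simp only [Prod.mk.injEq] at h
      exact Prod.ext (by omega) (by omega)
    exact Summable.comp_injective (f := fun p : ℕ × ℕ => s3 p.1 * s3 p.2 * a p.1 p.2 ^ 2)
      (i := fun p : ℕ × ℕ => ((j₁ + p.1, j₂ + p.2) : ℕ × ℕ)) hgsum hinj
  -- tail sums and the dominating sequence D
  set S : ℕ × ℕ → ℝ := fun j =>
    ∑' p : ℕ × ℕ, s3 (j.1 + p.1) * s3 (j.2 + p.2) * a (j.1 + p.1) (j.2 + p.2) ^ 2 with hSdef
  set D : ℕ × ℕ → ℝ := fun j => 9 * (1 / sq1 j.1 * (1 / sq1 j.2)) * S j with hDdef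
  have hSnn : ∀ j, 0 ≤ S j := fun j => tsum_nonneg (fun p => hgnn (j.1 + p.1, j.2 + p.2))
  have hDnn : ∀ j, 0 ≤ D j := by
    intro j
    have h1 : (0:ℝ) ≤ 9 * (1 / sq1 j.1 * (1 / sq1 j.2)) :=
      mul_nonneg (by norm_num)
        (mul_nonneg (div_pos one_pos (sq1_pos _)).le (div_pos one_pos (sq1_pos _)).le)
    exact mul_nonneg h1 (hSnn j)
  have hT2 : ∀ j : ℕ × ℕ, (∑' p : ℕ × ℕ, a (j.1 + p.1) (j.2 + p.2)) ^ 2 ≤ D j := by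
    intro j
    obtain ⟨habs, h1⟩ := csj a hgsum j.1 j.2
    have h2 : |∑' p : ℕ × ℕ, a (j.1 + p.1) (j.2 + p.2)| ≤
        ∑' p : ℕ × ℕ, |a (j.1 + p.1) (j.2 + p.2)| := by
      have := norm_tsum_le_tsum_norm (f := fun p : ℕ × ℕ => a (j.1 + p.1) (j.2 + p.2))
        (by simpa [Real.norm_eq_abs] using habs)
      simpa [Real.norm_eq_abs] using this
    calc (∑' p : ℕ × ℕ, a (j.1 + p.1) (j.2 + p.2)) ^ 2
        = |∑' p : ℕ × ℕ, a (j.1 + p.1) (j.2 + p.2)| ^ 2 := (sq_abs _).symm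
      _ ≤ (∑' p : ℕ × ℕ, |a (j.1 + p.1) (j.2 + p.2)|) ^ 2 :=
          pow_le_pow_left₀ (abs_nonneg _) h2 2
      _ ≤ S j * (3 / sq1 j.1 * (3 / sq1 j.2)) := h1
      _ = D j := by rw [hDdef]; ring
  -- the `ℝ≥0∞`-valued computation
  set W : ℕ → ℝ≥0∞ := fun k => ENNReal.ofReal (1 / sq1 k) with hWdef
  set G : ℕ × ℕ → ℝ≥0∞ := fun i => ENNReal.ofReal (s3 i.1 * s3 i.2 * a i.1 i.2 ^ 2) with hGdef
  have hc : ∀ i : ℕ, ∑ k ∈ Finset.range (i + 1), W k ≤ ENNReal.ofReal (2 * sq1 i) := by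
    intro i
    rw [hWdef, ← ENNReal.ofReal_sum_of_nonneg
      (fun k _ => (div_pos one_pos (sq1_pos _)).le)]
    exact ENNReal.ofReal_le_ofReal (head1 i)
  have hXi : (∑' j : ℕ × ℕ, ∑' p : ℕ × ℕ, W j.1 * W j.2 * G (j.1 + p.1, j.2 + p.2)) ≤
      4 * ENNReal.ofReal (∑' p : ℕ × ℕ,
        ((p.1 : ℝ) + 1) ^ 2 * ((p.2 : ℝ) + 1) ^ 2 * a p.1 p.2 ^ 2) := by
    calc ∑' j : ℕ × ℕ, ∑' p : ℕ × ℕ, W j.1 * W j.2 * G (j.1 + p.1, j.2 + p.2)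
        = ∑' j₁ : ℕ, ∑' j₂ : ℕ, ∑' p₁ : ℕ, ∑' p₂ : ℕ,
            W j₁ * W j₂ * G (j₁ + p₁, j₂ + p₂) := by
          rw [ENNReal.tsum_prod']
          exact tsum_congr fun j₁ => tsum_congr fun j₂ => ENNReal.tsum_prod'
      _ = ∑' j₁ : ℕ, ∑' p₁ : ℕ, ∑' j₂ : ℕ, ∑' p₂ : ℕ,
            W j₂ * (W j₁ * G (j₁ + p₁, j₂ + p₂)) := by
          refine tsum_congr fun j₁ => ?_
          rw [ENNReal.tsum_comm]
          exact tsum_congr fun p₁ => tsum_congr fun j₂ => tsum_congr fun p₂ => by ring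
      _ = ∑' j₁ : ℕ, ∑' p₁ : ℕ, W j₁ * (∑' i₂ : ℕ,
            (∑ k ∈ Finset.range (i₂ + 1), W k) * G (j₁ + p₁, i₂)) := by
          refine tsum_congr fun j₁ => tsum_congr fun p₁ => ?_
          rw [swap1 W (fun i₂ => W j₁ * G (j₁ + p₁, i₂))]
          rw [← ENNReal.tsum_mul_left]
          exact tsum_congr fun i₂ => by ring
      _ = ∑' i₁ : ℕ, (∑ k ∈ Finset.range (i₁ + 1), W k) * (∑' i₂ : ℕ,
            (∑ k ∈ Finset.range (i₂ + 1), W k) * G (i₁, i₂)) :=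
          swap1 W (fun i₁ => ∑' i₂ : ℕ, (∑ k ∈ Finset.range (i₂ + 1), W k) * G (i₁, i₂))
      _ ≤ ∑' i₁ : ℕ, ENNReal.ofReal (2 * sq1 i₁) * (∑' i₂ : ℕ,
            ENNReal.ofReal (2 * sq1 i₂) * G (i₁, i₂)) := by
          gcongr with i₁ i₂
          · exact hc i₁
          · exact hc i₂
      _ = ∑' i₁ : ℕ, ∑' i₂ : ℕ, ENNReal.ofReal (4 *
            (((i₁ : ℝ) + 1) ^ 2 * ((i₂ : ℝ) + 1) ^ 2 * a i₁ i₂ ^ 2)) := by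
          refine tsum_congr fun i₁ => ?_
          rw [← ENNReal.tsum_mul_left]
          refine tsum_congr fun i₂ => ?_
          rw [hGdef]
          rw [← ENNReal.ofReal_mul (mul_nonneg (by norm_num) (sq1_pos i₂).le),
            ← ENNReal.ofReal_mul (mul_nonneg (by norm_num) (sq1_pos i₁).le)]
          congr 1
          show 2 * sq1 i₁ * (2 * sq1 i₂ * (s3 i₁ * s3 i₂ * a i₁ i₂ ^ 2)) = _
          have e1 := sq1_mul_s3 i₁
          have e2 := sq1_mul_s3 i₂
          calc 2 * sq1 i₁ * (2 * sq1 i₂ * (s3 i₁ * s3 i₂ * a i₁ i₂ ^ 2))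
              = 4 * ((sq1 i₁ * s3 i₁) * ((sq1 i₂ * s3 i₂) * a i₁ i₂ ^ 2)) := by ring
            _ = 4 * (((i₁ : ℝ) + 1) ^ 2 * ((i₂ : ℝ) + 1) ^ 2 * a i₁ i₂ ^ 2) := by
                rw [e1, e2]; ring
      _ = 4 * ENNReal.ofReal (∑' p : ℕ × ℕ,
            ((p.1 : ℝ) + 1) ^ 2 * ((p.2 : ℝ) + 1) ^ 2 * a p.1 p.2 ^ 2) := by
          rw [← ENNReal.tsum_prod (f := fun (i₁ i₂ : ℕ) => ENNReal.ofReal (4 *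
            (((i₁ : ℝ) + 1) ^ 2 * ((i₂ : ℝ) + 1) ^ 2 * a i₁ i₂ ^ 2)))]
          rw [← ENNReal.ofReal_tsum_of_nonneg (fun p => by positivity) (hF.mul_left 4)]
          rw [tsum_mul_left, ENNReal.ofReal_mul (by norm_num)]
          norm_num
  have hDof : ∀ j : ℕ × ℕ, ENNReal.ofReal (D j) =
      9 * (W j.1 * W j.2 * ∑' p : ℕ × ℕ, G (j.1 + p.1, j.2 + p.2)) := by
    intro j
    have hS : ENNReal.ofReal (S j) = ∑' p : ℕ × ℕ, G (j.1 + p.1, j.2 + p.2) := by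
      simp only [hSdef, hGdef]
      exact ENNReal.ofReal_tsum_of_nonneg (fun p => hgnn (j.1 + p.1, j.2 + p.2))
        (hshift j.1 j.2)
    simp only [hDdef]
    rw [ENNReal.ofReal_mul (by
      exact mul_nonneg (by norm_num)
        (mul_nonneg (div_pos one_pos (sq1_pos _)).le (div_pos one_pos (sq1_pos _)).le)),
      ENNReal.ofReal_mul (by norm_num),
      ENNReal.ofReal_mul (div_pos one_pos (sq1_pos _)).le, hS, hWdef]
    rw [show ENNReal.ofReal (9:ℝ) = (9:ℝ≥0∞) by norm_num]
    ring
  have hDtsum : ∑' j : ℕ × ℕ, ENNReal.ofReal (D j) ≤ 36 * ENNReal.ofReal (∑' p : ℕ × ℕ,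
      ((p.1 : ℝ) + 1) ^ 2 * ((p.2 : ℝ) + 1) ^ 2 * a p.1 p.2 ^ 2) := by
    rw [tsum_congr hDof, ENNReal.tsum_mul_left]
    have h1 : ∑' j : ℕ × ℕ, W j.1 * W j.2 * ∑' p : ℕ × ℕ, G (j.1 + p.1, j.2 + p.2)
        = ∑' j : ℕ × ℕ, ∑' p : ℕ × ℕ, W j.1 * W j.2 * G (j.1 + p.1, j.2 + p.2) :=
      tsum_congr fun j => (ENNReal.tsum_mul_left).symm
    rw [h1]
    calc 9 * ∑' j : ℕ × ℕ, ∑' p : ℕ × ℕ, W j.1 * W j.2 * G (j.1 + p.1, j.2 + p.2)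
        ≤ 9 * (4 * ENNReal.ofReal (∑' p : ℕ × ℕ,
            ((p.1 : ℝ) + 1) ^ 2 * ((p.2 : ℝ) + 1) ^ 2 * a p.1 p.2 ^ 2)) := by
          exact mul_le_mul_right hXi 9
      _ = 36 * ENNReal.ofReal (∑' p : ℕ × ℕ,
            ((p.1 : ℝ) + 1) ^ 2 * ((p.2 : ℝ) + 1) ^ 2 * a p.1 p.2 ^ 2) := by
          rw [← mul_assoc]
          norm_num
  have hDsum : Summable D := by
    have hne : ∑' j : ℕ × ℕ, ENNReal.ofReal (D j) ≠ ⊤ := by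
      refine ne_top_of_le_ne_top ?_ hDtsum
      exact (ENNReal.mul_lt_top (by norm_num) ENNReal.ofReal_lt_top).ne
    have h := ENNReal.summable_toReal hne
    have heq : (fun j : ℕ × ℕ => (ENNReal.ofReal (D j)).toReal) = D :=
      funext fun j => ENNReal.toReal_ofReal (hDnn j)
    rwa [heq] at h
  have hDle : ∑' j : ℕ × ℕ, D j ≤ 36 * ∑' p : ℕ × ℕ,
      ((p.1 : ℝ) + 1) ^ 2 * ((p.2 : ℝ) + 1) ^ 2 * a p.1 p.2 ^ 2 := by
    have h1 : ENNReal.ofReal (∑' j : ℕ × ℕ, D j) ≤ ENNReal.ofReal (36 * ∑' p : ℕ × ℕ,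
        ((p.1 : ℝ) + 1) ^ 2 * ((p.2 : ℝ) + 1) ^ 2 * a p.1 p.2 ^ 2) := by
      rw [ENNReal.ofReal_tsum_of_nonneg hDnn hDsum]
      refine le_trans hDtsum ?_
      rw [ENNReal.ofReal_mul (by norm_num)]
      norm_num
    refine (ENNReal.ofReal_le_ofReal_iff ?_).1 h1
    exact mul_nonneg (by norm_num) (tsum_nonneg fun p => by positivity)
  have hTsum : Summable (fun j : ℕ × ℕ =>
      (∑' p : ℕ × ℕ, a (j.1 + p.1) (j.2 + p.2)) ^ 2) :=
    Summable.of_nonneg_of_le (fun j => sq_nonneg _) hT2 hDsum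
  refine ⟨fun j₁ j₂ => (csj a hgsum j₁ j₂).1, hTsum, ?_⟩
  calc ∑' j : ℕ × ℕ, (∑' p : ℕ × ℕ, a (j.1 + p.1) (j.2 + p.2)) ^ 2
      ≤ ∑' j : ℕ × ℕ, D j := Summable.tsum_le_tsum hT2 hTsum hDsum
    _ ≤ 36 * ∑' p : ℕ × ℕ,
        ((p.1 : ℝ) + 1) ^ 2 * ((p.2 : ℝ) + 1) ^ 2 * a p.1 p.2 ^ 2 := hDle
end

section
/- Define n_k = 2^k and ε_k = 2^{-k}/k for k ≥ 1, ε_0 = 1. Let a_i = ε_k if i = n_k for some k ≥ 0, and a_i = 0 otherwise. Then ∑_{i=0}^∞ i² a_i² < ∞ while ∑_{j=0}^∞ (∑_{i=j}^∞ a_i²)^{1/2} = ∞. -/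
/-- Remark 3, numerical core: with `a_{2^k} = ε_k` (`ε_0 = 1`,
`ε_k = 2^{-k}/k`) and `a_i = 0` otherwise, `∑ i² a_i² < ∞` while
`∑_j (∑_{i≥j} a_i²)^{1/2} = ∞`. -/
theorem stmt9 (a : ℕ → ℝ)
    (h1 : a 1 = 1)
    (h2 : ∀ k : ℕ, 1 ≤ k → a (2 ^ k) = (2 : ℝ) ^ (-(k : ℤ)) / (k : ℝ))
    (h0 : ∀ i : ℕ, (¬ ∃ k : ℕ, i = 2 ^ k) → a i = 0) :
    Summable (fun i : ℕ => (i : ℝ) ^ 2 * a i ^ 2) ∧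
    ¬ Summable (fun j : ℕ => Real.sqrt (∑' i : ℕ, a (j + i) ^ 2)) := by
  have ha0 : a 0 = 0 := by
    apply h0
    rintro ⟨k, hk⟩
    exact absurd hk.symm (pow_ne_zero k two_ne_zero)
  have ha_nonneg : ∀ i, 0 ≤ a i := by
    intro i
    by_cases h : ∃ k : ℕ, i = 2 ^ k
    · obtain ⟨k, rfl⟩ := h
      cases k with
      | zero => simp only [pow_zero, h1]; norm_num
      | succ m =>
        rw [h2 (m + 1) (Nat.le_add_left 1 m)]
        positivity
    · rw [h0 i h]
  -- Part 1
  have hinj : Function.Injective (fun k : ℕ => 2 ^ k) :=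
    fun m n h => Nat.pow_right_injective (le_refl 2) h
  have hvanish : ∀ i : ℕ, i ∉ Set.range (fun k : ℕ => 2 ^ k) →
      (i : ℝ) ^ 2 * a i ^ 2 = 0 := by
    intro i hi
    have : ¬ ∃ k : ℕ, i = 2 ^ k := by
      rintro ⟨k, rfl⟩; exact hi ⟨k, rfl⟩
    rw [h0 i this]; ring
  have hcomp : Summable (fun k : ℕ => ((2 ^ k : ℕ) : ℝ) ^ 2 * a (2 ^ k) ^ 2) := by
    rw [← summable_nat_add_iff 1]
    have heq : (fun k : ℕ => ((2 ^ (k + 1) : ℕ) : ℝ) ^ 2 * a (2 ^ (k + 1)) ^ 2)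
        = fun k : ℕ => 1 / ((k : ℝ) + 1) ^ 2 := by
      funext k
      rw [h2 (k + 1) (Nat.le_add_left 1 k), zpow_neg, zpow_natCast]
      have hp : ((2 : ℝ)) ^ ((k : ℕ) + 1) ≠ 0 := by positivity
      have hk1 : ((k : ℝ) + 1) ≠ 0 := by positivity
      push_cast
      field_simp
    rw [heq]
    have : Summable (fun n : ℕ => 1 / ((n : ℝ)) ^ 2) :=
      Real.summable_one_div_nat_pow.2 one_lt_two
    have := (summable_nat_add_iff 1).2 this
    apply this.congr
    intro n
    push_cast
    ring
  have hpart1 : Summable (fun i : ℕ => (i : ℝ) ^ 2 * a i ^ 2) :=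
    (hinj.summable_iff hvanish).1 hcomp
  refine ⟨hpart1, ?_⟩
  -- a² summable
  have hsq : Summable (fun i : ℕ => a i ^ 2) := by
    apply Summable.of_nonneg_of_le (fun i => sq_nonneg _) _ hpart1
    intro i
    cases i with
    | zero => simp [ha0]
    | succ n =>
      have h1n : (1 : ℝ) ≤ ((n + 1 : ℕ) : ℝ) ^ 2 := by
        push_cast; nlinarith [Nat.cast_nonneg (α := ℝ) n]
      nlinarith [sq_nonneg (a (n + 1))]
  -- key lower bound on tails
  have hkey : ∀ j k : ℕ, j ≤ 2 ^ k →
      a (2 ^ k) ≤ Real.sqrt (∑' i : ℕ, a (j + i) ^ 2) := by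
    intro j k hjk
    have hshift : Summable (fun i : ℕ => a (j + i) ^ 2) :=
      hsq.comp_injective (add_right_injective j)
    have hterm : a (2 ^ k) ^ 2 ≤ ∑' i : ℕ, a (j + i) ^ 2 := by
      have h := Summable.le_tsum hshift (2 ^ k - j) (fun b _ => sq_nonneg _)
      rwa [Nat.add_sub_cancel' hjk] at h
    calc a (2 ^ k) = Real.sqrt (a (2 ^ k) ^ 2) := (Real.sqrt_sq (ha_nonneg _)).symm
      _ ≤ Real.sqrt (∑' i : ℕ, a (j + i) ^ 2) := Real.sqrt_le_sqrt hterm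
  set S : ℕ → ℝ := fun j => Real.sqrt (∑' i : ℕ, a (j + i) ^ 2) with hSdef
  have hSnonneg : ∀ j, 0 ≤ S j := fun j => Real.sqrt_nonneg _
  -- block lower bound
  have hblock : ∀ K : ℕ,
      (∑ i ∈ Finset.range K, 1 / ((i : ℝ) + 1)) / 2
        ≤ ∑ j ∈ Finset.range (2 ^ K + 1), S j := by
    intro K
    induction K with
    | zero =>
      simp only [Finset.range_zero, Finset.sum_empty, zero_div]
      exact Finset.sum_nonneg fun j _ => hSnonneg j
    | succ K ih =>
      have hle : 2 ^ K + 1 ≤ 2 ^ (K + 1) + 1 := by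
        have := Nat.pow_le_pow_right (by norm_num : 1 ≤ 2) (Nat.le_succ K)
        omega
      have hsplit : ∑ j ∈ Finset.range (2 ^ (K + 1) + 1), S j
          = ∑ j ∈ Finset.range (2 ^ K + 1), S j
            + ∑ j ∈ Finset.Ico (2 ^ K + 1) (2 ^ (K + 1) + 1), S j := by
        rw [Finset.range_eq_Ico, Finset.range_eq_Ico]
        exact (Finset.sum_Ico_consecutive S (Nat.zero_le _) hle).symm
      have hcard : (Finset.Ico (2 ^ K + 1) (2 ^ (K + 1) + 1)).card = 2 ^ K := by
        rw [Nat.card_Ico]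
        have : 2 ^ (K + 1) = 2 * 2 ^ K := by ring
        omega
      have hlb : ∀ j ∈ Finset.Ico (2 ^ K + 1) (2 ^ (K + 1) + 1),
          a (2 ^ (K + 1)) ≤ S j := by
        intro j hj
        rw [Finset.mem_Ico] at hj
        exact hkey j (K + 1) (by omega)
      have hsum_lb := Finset.card_nsmul_le_sum _ _ _ hlb
      rw [hcard] at hsum_lb
      have hval : (2 ^ K : ℕ) • a (2 ^ (K + 1)) = (1 / ((K : ℝ) + 1)) / 2 := by
        rw [h2 (K + 1) (Nat.le_add_left 1 K), nsmul_eq_mul, zpow_neg, zpow_natCast]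
        have hp : ((2 : ℝ)) ^ (K + 1) ≠ 0 := by positivity
        have hk1 : ((K : ℝ) + 1) ≠ 0 := by positivity
        push_cast
        field_simp
        ring
      rw [hval] at hsum_lb
      rw [hsplit, Finset.sum_range_succ]
      linarith
  -- conclude
  intro hS
  have hbound : ∀ K : ℕ, ∑ i ∈ Finset.range K, 1 / ((i : ℝ) + 1) ≤ 2 * ∑' j, S j := by
    intro K
    have h1' := hblock K
    have h2' : ∑ j ∈ Finset.range (2 ^ K + 1), S j ≤ ∑' j, S j :=
      Summable.sum_le_tsum _ (fun i _ => hSnonneg i) hS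
    linarith
  have htend := Real.tendsto_sum_range_one_div_nat_succ_atTop
  obtain ⟨K, hK⟩ := (htend.eventually_gt_atTop (2 * ∑' j, S j)).exists
  have := hbound K
  simp only [one_div] at hK this
  linarith
end

section
/- Let (b_{j₁,j₂})_{j₁,j₂≥1} be nonnegative, nonincreasing in each coordinate, with ∑_{j₁,j₂≥1} b_{j₁,j₂} < ∞. Then ∑_{j₁=1}^∞ ∑_{j₂=1}^∞ j₁ j₂ b_{j₁,j₂}² < ∞. -/
/-- d = 2 estimate in the proof of Remark 2: a nonnegative
array, nonincreasing in each coordinate and summable, satisfies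
`∑_{j₁,j₂} j₁ j₂ b_{j₁,j₂}² < ∞` (here `b j₁ j₂` stands for `b_{j₁+1,j₂+1}`). -/
theorem stmt17 (b : ℕ → ℕ → ℝ)
    (hpos : ∀ j₁ j₂, 0 ≤ b j₁ j₂)
    (hmono₁ : ∀ j₂, Antitone fun j₁ => b j₁ j₂)
    (hmono₂ : ∀ j₁, Antitone fun j₂ => b j₁ j₂)
    (hsum : Summable fun p : ℕ × ℕ => b p.1 p.2) :
    Summable (fun p : ℕ × ℕ =>
      ((p.1 : ℝ) + 1) * ((p.2 : ℝ) + 1) * b p.1 p.2 ^ 2) := by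
  set S : ℝ := ∑' p : ℕ × ℕ, b p.1 p.2 with hS
  have key : ∀ j₁ j₂ : ℕ, ((j₁ : ℝ) + 1) * ((j₂ : ℝ) + 1) * b j₁ j₂ ≤ S := by
    intro j₁ j₂
    have hle : ∑ p ∈ Finset.range (j₁ + 1) ×ˢ Finset.range (j₂ + 1), b j₁ j₂
        ≤ ∑ p ∈ Finset.range (j₁ + 1) ×ˢ Finset.range (j₂ + 1), b p.1 p.2 := by
      refine Finset.sum_le_sum fun p hp => ?_
      simp only [Finset.mem_product, Finset.mem_range, Nat.lt_succ_iff] at hp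
      calc b j₁ j₂ ≤ b p.1 j₂ := hmono₁ j₂ hp.1
        _ ≤ b p.1 p.2 := hmono₂ p.1 hp.2
    have hle2 : ∑ p ∈ Finset.range (j₁ + 1) ×ˢ Finset.range (j₂ + 1), b p.1 p.2 ≤ S :=
      Summable.sum_le_tsum _ (fun p _ => hpos p.1 p.2) hsum
    have hcard : ∑ p ∈ Finset.range (j₁ + 1) ×ˢ Finset.range (j₂ + 1), b j₁ j₂
        = ((j₁ : ℝ) + 1) * ((j₂ : ℝ) + 1) * b j₁ j₂ := by
      rw [Finset.sum_const, Finset.card_product, Finset.card_range, Finset.card_range]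
      ring
    linarith
  refine Summable.of_nonneg_of_le (fun p => ?_) (fun p => ?_) (hsum.mul_left S)
  · have := hpos p.1 p.2
    positivity
  · have h1 := key p.1 p.2
    have h2 := hpos p.1 p.2
    calc ((p.1 : ℝ) + 1) * ((p.2 : ℝ) + 1) * b p.1 p.2 ^ 2
        = (((p.1 : ℝ) + 1) * ((p.2 : ℝ) + 1) * b p.1 p.2) * b p.1 p.2 := by ring
      _ ≤ S * b p.1 p.2 := mul_le_mul_of_nonneg_right h1 h2
end
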